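/- For n ∈ {5, 6}, the (n,3)-regular graph R_(n,3) (the complement of the cycle C_n) satisfies rvcl(R_(n,3)) = 3. -/

import Mathlib

namespace LocatingRainbow

open SimpleGraph

variable {V : Type*}

/-- The internal vertices of a walk: its support without the endpoints. -/
def internalVertices {G : SimpleGraph V} {u v : V} (p : G.Walk u v) : List V :=
  p.support.tail.dropLast

/-- `c` is a rainbow vertex coloring of `G` (with colors in `Fin k`) if any two distinct
vertices are joined by a path whose internal vertices have pairwise distinct colors. -/
def IsRainbowVertexColoring (G : SimpleGraph V) {k : ℕ} (c : V → Fin k) : Prop :=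
  ∀ u v : V, u ≠ v → ∃ p : G.Walk u v, p.IsPath ∧ ((internalVertices p).map c).Nodup

/-- The distance from a vertex `v` to the color class of the color `i`. -/
noncomputable def distToColor (G : SimpleGraph V) {k : ℕ} (c : V → Fin k) (v : V) (i : Fin k) :
    ℕ :=
  sInf {m | ∃ y, c y = i ∧ G.dist v y = m}

/-- The rainbow code of a vertex `v`: the vector of distances to all color classes. -/
noncomputable def rainbowCode (G : SimpleGraph V) {k : ℕ} (c : V → Fin k) (v : V) :
    Fin k → ℕ :=
  fun i => distToColor G c v i

/-- `c` is a locating rainbow coloring if it is a rainbow vertex coloring and distinct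
vertices have distinct rainbow codes. -/
def IsLocatingRainbowColoring (G : SimpleGraph V) {k : ℕ} (c : V → Fin k) : Prop :=
  IsRainbowVertexColoring G c ∧ Function.Injective (rainbowCode G c)

/-- The rainbow vertex connection number of `G`. -/
noncomputable def rvc (G : SimpleGraph V) : ℕ :=
  sInf {k | ∃ c : V → Fin k, IsRainbowVertexColoring G c}

/-- The locating rainbow connection number of `G`. -/
noncomputable def rvcl (G : SimpleGraph V) : ℕ :=
  sInf {k | ∃ c : V → Fin k, IsLocatingRainbowColoring G c}

end LocatingRainbow

namespace LocatingRainbow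

open SimpleGraph

/-- The `(n,2)`-regular graph (for even `n`): the complete graph on `Fin n` with the
perfect matching `{vᵢ v_{i+n/2}}` (indices mod `n`) removed; every vertex has degree
`n - 2`. -/
def Rn2 (n : ℕ) : SimpleGraph (Fin n) where
  Adj i j := i ≠ j ∧ (i.val + n / 2) % n ≠ j.val ∧ (j.val + n / 2) % n ≠ i.val
  symm := ⟨fun _ _ ⟨h1, h2, h3⟩ => ⟨h1.symm, h3, h2⟩⟩
  loopless := ⟨fun _ h => h.1 rfl⟩

/-- The `(n,3)`-regular graph: the complement of the cycle `C_n`, i.e. the complete graph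
with the edges of a Hamiltonian cycle removed; every vertex has degree `n - 3`. -/
def Rn3 (n : ℕ) : SimpleGraph (Fin n) := (cycleGraph n)ᶜ

/-- The `(n,t)`-regular graph for `t ∈ {2, 3}`. -/
def Rnt (n t : ℕ) : SimpleGraph (Fin n) := if t = 2 then Rn2 n else Rn3 n

end LocatingRainbow


namespace LocatingRainbow

open SimpleGraph

variable {V : Type*} {G : SimpleGraph V} {k : ℕ} {c : V → Fin k} {v y : V} {i : Fin k}

lemma distToColor_eq_zero' (h : c v = i) : distToColor G c v i = 0 :=
  Nat.sInf_eq_zero.mpr (Or.inl ⟨v, h, SimpleGraph.dist_self⟩)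

lemma distToColor_ne_zero (hconn : G.Connected) (hne : c v ≠ i) (y : V) (hy : c y = i) :
    distToColor G c v i ≠ 0 := by
  intro h
  rcases Nat.sInf_eq_zero.mp h with ⟨z, hz, hd⟩ | hemp
  · exact hne ((hconn.dist_eq_zero_iff.mp hd) ▸ hz)
  · exact absurd hemp (Set.nonempty_iff_ne_empty.mp ⟨G.dist v y, y, hy, rfl⟩)

lemma distToColor_eq_one (hconn : G.Connected) (hne : c v ≠ i) (y : V) (hy : c y = i)
    (hadj : G.Adj v y) : distToColor G c v i = 1 := by
  refine le_antisymm (Nat.sInf_le ⟨y, hy, SimpleGraph.dist_eq_one_iff_adj.mpr hadj⟩) ?_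
  exact Nat.one_le_iff_ne_zero.mpr (distToColor_ne_zero hconn hne y hy)

lemma dist_le_two_of_common (w : V) (h1 : G.Adj v w) (h2 : G.Adj w y) : G.dist v y ≤ 2 :=
  SimpleGraph.dist_le (Walk.cons h1 (Walk.cons h2 Walk.nil))

lemma distToColor_eq_two (hconn : G.Connected)
    (h : ∀ z, c z = i → v ≠ z ∧ ¬ G.Adj v z)
    (y : V) (hy : c y = i) (w : V) (h1 : G.Adj v w) (h2 : G.Adj w y) :
    distToColor G c v i = 2 := by
  have hdy : G.dist v y = 2 := by
    have hle := dist_le_two_of_common (G := G) w h1 h2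
    have h0 : G.dist v y ≠ 0 := fun hh => (h y hy).1 (hconn.dist_eq_zero_iff.mp hh)
    have h1' : G.dist v y ≠ 1 := fun hh => (h y hy).2 (SimpleGraph.dist_eq_one_iff_adj.mp hh)
    omega
  refine le_antisymm (Nat.sInf_le ⟨y, hy, hdy⟩) ?_
  refine le_csInf ⟨2, y, hy, hdy⟩ ?_
  rintro m ⟨z, hz, rfl⟩
  have h0 : G.dist v z ≠ 0 := fun hh => (h z hz).1 (hconn.dist_eq_zero_iff.mp hh)
  have h1' : G.dist v z ≠ 1 := fun hh => (h z hz).2 (SimpleGraph.dist_eq_one_iff_adj.mp hh)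
  omega

/-- The "two-step" property: any two vertices are equal, adjacent, or joined by a common
neighbour. -/
def TwoStep (G : SimpleGraph V) : Prop :=
  ∀ u v : V, u = v ∨ G.Adj u v ∨ ∃ w, G.Adj u w ∧ G.Adj w v

lemma TwoStep.connected [Nonempty V] (hP : TwoStep G) : G.Connected := by
  refine ⟨fun u v => ?_⟩
  rcases hP u v with h | h | ⟨w, h1, h2⟩
  · exact h ▸ SimpleGraph.Reachable.refl u
  · exact h.reachable
  · exact h1.reachable.trans h2.reachable

lemma TwoStep.dist_le_two (hP : TwoStep G) (u v : V) : G.dist u v ≤ 2 := by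
  rcases hP u v with h | h | ⟨w, h1, h2⟩
  · simp [h, SimpleGraph.dist_self]
  · rw [SimpleGraph.dist_eq_one_iff_adj.mpr h]; omega
  · exact dist_le_two_of_common w h1 h2

lemma TwoStep.rainbow (hP : TwoStep G) : IsRainbowVertexColoring G c := by
  intro u v huv
  rcases hP u v with h | h | ⟨w, h1, h2⟩
  · exact absurd h huv
  · refine ⟨Walk.cons h Walk.nil, ?_, ?_⟩
    · simp [Walk.isPath_def, h.ne]
    · simp [internalVertices]
  · refine ⟨Walk.cons h1 (Walk.cons h2 Walk.nil), ?_, ?_⟩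
    · simp [Walk.isPath_def, h1.ne, h2.ne, huv]
    · simp [internalVertices]

lemma distToColor_formula [DecidableEq V] [Fintype V] [DecidableRel G.Adj]
    [Nonempty V] (hP : TwoStep G)
    (hsurj : ∀ i : Fin k, ∃ y, c y = i) (v : V) (i : Fin k) :
    distToColor G c v i =
      if c v = i then 0 else if ∃ y, c y = i ∧ G.Adj v y then 1 else 2 := by
  have hconn := hP.connected
  split_ifs with h0 h1
  · exact distToColor_eq_zero' h0
  · obtain ⟨y, hy, hadj⟩ := h1
    exact distToColor_eq_one hconn h0 y hy hadj
  · push_neg at h1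
    obtain ⟨y, hy⟩ := hsurj i
    have hkey : ∀ z, c z = i → v ≠ z ∧ ¬ G.Adj v z := by
      intro z hz
      exact ⟨fun hvz => h0 (hvz ▸ hz), h1 z hz⟩
    have hne : v ≠ y := (hkey y hy).1
    rcases hP v y with h | h | ⟨w, hw1, hw2⟩
    · exact absurd h hne
    · exact absurd h (hkey y hy).2
    · exact distToColor_eq_two hconn hkey y hy w hw1 hw2

lemma no_loc_two [DecidableEq V] [Fintype V] (hP : TwoStep G) [Nonempty V]
    (hcard : 5 ≤ Fintype.card V) (c : V → Fin 2) :
    ¬ Function.Injective (rainbowCode G c) := by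
  intro hinj
  have hconn := hP.connected
  obtain ⟨i, hi⟩ := Fintype.exists_lt_card_fiber_of_mul_lt_card c
    (by simp only [Fintype.card_fin]; omega : Fintype.card (Fin 2) * 2 < Fintype.card V)
  set s := Finset.univ.filter (fun x => c x = i) with hs
  have hj : ∀ t : Fin 2, t = i ∨ t = 1 - i := by
    intro t; fin_cases i <;> fin_cases t <;> simp
  set j := 1 - i with hjdef
  have hji : j ≠ i := by fin_cases i <;> simp [hjdef]
  by_cases hjne : ∃ y, c y = j
  · obtain ⟨y, hy⟩ := hjne
    have hmap : ∀ x ∈ s, rainbowCode G c x j ∈ ({1, 2} : Finset ℕ) := by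
      intro x hx
      have hcx : c x = i := by simpa [hs] using hx
      have h0 : rainbowCode G c x j ≠ 0 :=
        distToColor_ne_zero hconn (by rw [hcx]; exact Ne.symm hji) y hy
      have h2 : rainbowCode G c x j ≤ 2 :=
        le_trans (Nat.sInf_le ⟨y, hy, rfl⟩) (hP.dist_le_two x y)
      simp only [Finset.mem_insert, Finset.mem_singleton]
      omega
    have hinjOn : Set.InjOn (fun x => rainbowCode G c x j) s := by
      intro a ha b hb hab
      have hca : c a = i := by simpa [hs] using ha
      have hcb : c b = i := by simpa [hs] using hb
      apply hinj
      funext t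
      rcases hj t with h | h
      · rw [show rainbowCode G c a t = 0 from distToColor_eq_zero' (hca.trans h.symm),
          show rainbowCode G c b t = 0 from distToColor_eq_zero' (hcb.trans h.symm)]
      · rw [h]; exact hab
    have := Finset.card_le_card_of_injOn _ hmap hinjOn
    have hc2 : ({1, 2} : Finset ℕ).card ≤ 2 := by decide
    omega
  · push_neg at hjne
    obtain ⟨a, ha, b, hb, hab⟩ := Finset.one_lt_card.mp (by omega : 1 < s.card)
    have hca : c a = i := by simpa [hs] using ha
    have hcb : c b = i := by simpa [hs] using hb
    apply hab
    apply hinj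
    funext t
    rcases hj t with h | h
    · rw [show rainbowCode G c a t = 0 from distToColor_eq_zero' (hca.trans h.symm),
        show rainbowCode G c b t = 0 from distToColor_eq_zero' (hcb.trans h.symm)]
    · have hset : {m | ∃ y, c y = t ∧ G.dist a y = m} = ∅ := by
        ext m; simp only [Set.mem_setOf_eq, Set.mem_empty_iff_false, iff_false]
        rintro ⟨z, hz, _⟩; exact hjne z (h ▸ hz)
      have hset' : {m | ∃ y, c y = t ∧ G.dist b y = m} = ∅ := by
        ext m; simp only [Set.mem_setOf_eq, Set.mem_empty_iff_false, iff_false]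
        rintro ⟨z, hz, _⟩; exact hjne z (h ▸ hz)
      show distToColor G c a t = distToColor G c b t
      rw [distToColor, distToColor, hset, hset']

lemma rvcl_eq_three [Fintype V] [DecidableEq V] [Nonempty V] [DecidableRel G.Adj]
    (hP : TwoStep G) (hcard : 5 ≤ Fintype.card V) (c : V → Fin 3)
    (hsurj : ∀ i : Fin 3, ∃ y, c y = i)
    (hinj : Function.Injective (fun v (i : Fin 3) =>
      if c v = i then (0 : ℕ) else if ∃ y, c y = i ∧ G.Adj v y then 1 else 2)) :
    rvcl G = 3 := by
  have hcode : rainbowCode G c = fun v i =>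
      if c v = i then (0 : ℕ) else if ∃ y, c y = i ∧ G.Adj v y then 1 else 2 :=
    funext fun v => funext fun i => distToColor_formula hP hsurj v i
  have h3 : (3 : ℕ) ∈ {k | ∃ c : V → Fin k, IsLocatingRainbowColoring G c} := by
    refine ⟨c, hP.rainbow, ?_⟩
    rw [hcode]; exact hinj
  refine le_antisymm (Nat.sInf_le h3) (le_csInf ⟨3, h3⟩ ?_)
  rintro m ⟨c', hrb, hinj'⟩
  by_contra hm
  push_neg at hm
  interval_cases m
  · exact (c' (Classical.arbitrary V)).elim0
  · obtain ⟨a, b, hab⟩ := Fintype.exists_pair_of_one_lt_card (α := V) (by omega)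
    apply hab
    apply hinj'
    funext i
    rw [show rainbowCode G c' a i = 0 from distToColor_eq_zero' (Subsingleton.elim _ _),
      show rainbowCode G c' b i = 0 from distToColor_eq_zero' (Subsingleton.elim _ _)]
  · exact no_loc_two hP hcard c' hinj'

end LocatingRainbow

open LocatingRainbow in
/-- For `n ∈ {5, 6}`, the `(n,3)`-regular graph (complement of the cycle `C_n`)
satisfies `rvcl(R_(n,3)) = 3`. -/
theorem rvcl_Rn3_small {n : ℕ} (hn : n = 5 ∨ n = 6) :
    rvcl (Rn3 n) = 3 := by
  rcases hn with rfl | rfl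
  · letI : DecidableRel (Rn3 5).Adj :=
      fun a b => inferInstanceAs (Decidable ((SimpleGraph.cycleGraph 5)ᶜ.Adj a b))
    have hP : TwoStep (Rn3 5) := by
      show ∀ u v : Fin 5, u = v ∨ (Rn3 5).Adj u v ∨ ∃ w, (Rn3 5).Adj u w ∧ (Rn3 5).Adj w v
      decide
    exact rvcl_eq_three hP (by simp) ![0, 1, 0, 2, 1] (by decide) (by decide)
  · letI : DecidableRel (Rn3 6).Adj :=
      fun a b => inferInstanceAs (Decidable ((SimpleGraph.cycleGraph 6)ᶜ.Adj a b))
    have hP : TwoStep (Rn3 6) := by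
      show ∀ u v : Fin 6, u = v ∨ (Rn3 6).Adj u v ∨ ∃ w, (Rn3 6).Adj u w ∧ (Rn3 6).Adj w v
      decide
    exact rvcl_eq_three hP (by simp) ![0, 2, 1, 2, 2, 2] (by decide) (by decide)
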